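/- arXiv:2601.08962 — 2 statements merged into one kernel-verified Lean document; each statement's English description precedes it below -/
import Mathlib

section
/- For every real q ≥ 1 and all reals a ≥ 0 and b ≥ 0 there exists a constant C > 0 such that for all x, y ∈ ℝ and every u > 0: | |x+y|^q · 1_{|x+y| ≤ u} − |x|^q | ≤ C · ( |x|^{q+a}/u^a + |x|^q·|y|^b/u^b + (min(|y|, u))^q + (if q > 1 then |x|^{q−1}·min(|y|, u) else 0) ). -/
lemma rpow_sub_rpow_le_mvt (q : ℝ) (hq : 1 ≤ q) {s t : ℝ} (ht : 0 ≤ t) (hts : t ≤ s) :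
    s ^ q - t ^ q ≤ q * s ^ (q - 1) * (s - t) := by
  rcases eq_or_lt_of_le (ht.trans hts) with h0 | hs
  · have hs0 : s = 0 := h0.symm
    have ht0 : t = 0 := le_antisymm (hs0 ▸ hts) ht
    simp [hs0, ht0]
  · have hb := one_add_mul_self_le_rpow_one_add (s := t / s - 1) (by
      have : 0 ≤ t / s := div_nonneg ht hs.le
      linarith) hq
    rw [show (1 : ℝ) + (t / s - 1) = t / s by ring] at hb
    rw [Real.div_rpow ht hs.le] at hb
    have hsq : (0 : ℝ) < s ^ q := Real.rpow_pos_of_pos hs q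
    have h2 : s ^ q * (1 + q * (t / s - 1)) ≤ t ^ q := by
      calc s ^ q * (1 + q * (t / s - 1)) ≤ s ^ q * (t ^ q / s ^ q) :=
            mul_le_mul_of_nonneg_left hb hsq.le
        _ = t ^ q := by field_simp
    have hsq1 : s ^ (q - 1) = s ^ q / s := by
      rw [Real.rpow_sub hs, Real.rpow_one]
    rw [hsq1]
    have hs' : s ≠ 0 := hs.ne'
    have : s ^ q * (q * (t / s - 1)) = q * (s ^ q / s) * (t - s) := by
      field_simp
    nlinarith [this]

set_option maxHeartbeats 1000000 in
/-- Truncated-power inequality used in the proof of jump-robustness of the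
subsampled covariance estimator (Theorem A.2). -/
theorem truncated_power_inequality (q a b : ℝ) (hq : 1 ≤ q) (ha : 0 ≤ a) (hb : 0 ≤ b) :
    ∃ C : ℝ, 0 < C ∧ ∀ x y u : ℝ, 0 < u →
      |(if |x + y| ≤ u then |x + y| ^ q else 0) - |x| ^ q| ≤
        C * (|x| ^ (q + a) / u ^ a + |x| ^ q * |y| ^ b / u ^ b +
          (min |y| u) ^ q + if 1 < q then |x| ^ (q - 1) * min |y| u else 0) := by
  have hq0 : (0 : ℝ) < q := lt_of_lt_of_le one_pos hq
  set C : ℝ := ((2:ℝ) ^ q + 1) * 2 ^ a + 2 ^ b + 3 * q * 2 ^ (q-1) * (3/2) ^ q + 3 with hC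
  have h2q : (0:ℝ) < (2:ℝ) ^ q := Real.rpow_pos_of_pos two_pos q
  have h2a : (0:ℝ) < (2:ℝ) ^ a := Real.rpow_pos_of_pos two_pos a
  have h2b : (0:ℝ) < (2:ℝ) ^ b := Real.rpow_pos_of_pos two_pos b
  have h2q1 : (0:ℝ) < (2:ℝ) ^ (q-1) := Real.rpow_pos_of_pos two_pos (q-1)
  have h32q : (0:ℝ) < ((3:ℝ)/2) ^ q := Real.rpow_pos_of_pos (by norm_num) q
  have hbig : (0:ℝ) < 3 * q * 2 ^ (q-1) * (3/2) ^ q := by positivity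
  have hCpos : 0 < C := by
    rw [hC]
    have h2 : 0 < ((2:ℝ) ^ q + 1) * 2 ^ a := by positivity
    linarith
  clear_value C
  refine ⟨C, hCpos, fun x y u hu => ?_⟩
  set m : ℝ := min |y| u with hm
  have hmnn : 0 ≤ m := le_min (abs_nonneg y) hu.le
  clear_value m
  have hT1 : 0 ≤ |x| ^ (q + a) / u ^ a := by positivity
  have hT2 : 0 ≤ |x| ^ q * |y| ^ b / u ^ b := by positivity
  have hT3 : 0 ≤ m ^ q := Real.rpow_nonneg hmnn q
  have hT4 : 0 ≤ (if 1 < q then |x| ^ (q - 1) * m else 0) := by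
    split
    · exact mul_nonneg (Real.rpow_nonneg (abs_nonneg x) _) hmnn
    · exact le_refl 0
  rcases le_or_gt (u / 2) |x| with h1 | h1
  · -- Case 1 : u/2 ≤ |x|
    have hxpos : 0 < |x| := lt_of_lt_of_le (by linarith) h1
    have hu2x : u ≤ 2 * |x| := by linarith
    have hL : |(if |x + y| ≤ u then |x + y| ^ q else 0) - |x| ^ q| ≤ u ^ q + |x| ^ q := by
      have h1' : (if |x + y| ≤ u then |x + y| ^ q else 0) ≤ u ^ q := by
        split
        · exact Real.rpow_le_rpow (abs_nonneg _) (by assumption) hq0.le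
        · positivity
      have h2' : (0:ℝ) ≤ (if |x + y| ≤ u then |x + y| ^ q else 0) := by
        split
        · exact Real.rpow_nonneg (abs_nonneg _) q
        · exact le_refl 0
      have hxq : 0 ≤ |x| ^ q := Real.rpow_nonneg (abs_nonneg x) q
      rw [abs_sub_le_iff]; constructor <;> nlinarith [Real.rpow_nonneg hu.le q]
    have huq : u ^ q ≤ 2 ^ q * |x| ^ q := by
      calc u ^ q ≤ (2 * |x|) ^ q := Real.rpow_le_rpow hu.le hu2x hq0.le
        _ = 2 ^ q * |x| ^ q := Real.mul_rpow (by norm_num) (abs_nonneg x)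
    have hxq2 : |x| ^ q ≤ 2 ^ a * (|x| ^ (q + a) / u ^ a) := by
      have hua : u ^ a ≤ 2 ^ a * |x| ^ a := by
        calc u ^ a ≤ (2 * |x|) ^ a := Real.rpow_le_rpow hu.le hu2x ha
          _ = 2 ^ a * |x| ^ a := Real.mul_rpow (by norm_num) (abs_nonneg x)
      have hxqa : |x| ^ (q + a) = |x| ^ q * |x| ^ a := Real.rpow_add hxpos q a
      have hua0 : (0:ℝ) < u ^ a := Real.rpow_pos_of_pos hu a
      have hxqnn : 0 ≤ |x| ^ q := Real.rpow_nonneg (abs_nonneg x) q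
      rw [hxqa, ← sub_nonneg]
      have key : 2 ^ a * (|x| ^ q * |x| ^ a / u ^ a) - |x| ^ q
          = |x| ^ q * (2 ^ a * |x| ^ a - u ^ a) / u ^ a := by field_simp
      rw [key]
      exact div_nonneg (mul_nonneg hxqnn (by linarith)) hua0.le
    have hc1 : ((2:ℝ) ^ q + 1) * 2 ^ a ≤ C := by rw [hC]; linarith
    have hc1nn : (0:ℝ) ≤ ((2:ℝ) ^ q + 1) * 2 ^ a := by positivity
    calc |(if |x + y| ≤ u then |x + y| ^ q else 0) - |x| ^ q|
        ≤ u ^ q + |x| ^ q := hL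
      _ ≤ (2 ^ q + 1) * |x| ^ q := by nlinarith [Real.rpow_nonneg (abs_nonneg x) q]
      _ ≤ (2 ^ q + 1) * (2 ^ a * (|x| ^ (q + a) / u ^ a)) := by
          apply mul_le_mul_of_nonneg_left hxq2 (by positivity)
      _ = ((2 ^ q + 1) * 2 ^ a) * (|x| ^ (q + a) / u ^ a) := by ring
      _ ≤ C * (|x| ^ (q + a) / u ^ a + |x| ^ q * |y| ^ b / u ^ b + m ^ q +
            if 1 < q then |x| ^ (q - 1) * m else 0) := by
          nlinarith [mul_le_mul_of_nonneg_right hc1 hT1, mul_nonneg hCpos.le hT2,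
            mul_nonneg hCpos.le hT3, mul_nonneg hCpos.le hT4]
  · rcases le_or_gt |x + y| u with h2 | h2
    · -- Case 3 : |x| < u/2 and |x+y| ≤ u
      rw [if_pos h2]
      rcases eq_or_lt_of_le (abs_nonneg y) with hy0 | hy0
      · have hy : y = 0 := abs_eq_zero.mp hy0.symm
        subst hy
        simp only [add_zero, sub_self, abs_zero]
        positivity
      · set s : ℝ := max |x + y| |x| with hs
        set t : ℝ := min |x + y| |x| with hts
        have htnn : 0 ≤ t := le_min (abs_nonneg _) (abs_nonneg _)
        have hts' : t ≤ s := min_le_max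
        clear_value s t
        have hLeq : abs (|x + y| ^ q - |x| ^ q) = s ^ q - t ^ q := by
          rcases le_total |x + y| |x| with h | h
          · rw [abs_sub_comm, abs_of_nonneg (by
              have := Real.rpow_le_rpow (abs_nonneg _) h hq0.le; linarith)]
            rw [hs, hts, max_eq_right h, min_eq_left h]
          · rw [abs_of_nonneg (by
              have := Real.rpow_le_rpow (abs_nonneg _) h hq0.le; linarith)]
            rw [hs, hts, max_eq_left h, min_eq_right h]
        have hst : s - t ≤ |y| := by
          have hd := abs_abs_sub_abs_le_abs_sub (x + y) x
          simp only [add_sub_cancel_left] at hd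
          rcases le_total |x + y| |x| with h | h
          · rw [hs, hts, max_eq_right h, min_eq_left h]
            rw [abs_sub_comm] at hd
            calc |x| - |x + y| ≤ abs (|x| - |x + y|) := le_abs_self _
              _ ≤ |y| := hd
          · rw [hs, hts, max_eq_left h, min_eq_right h]
            calc |x + y| - |x| ≤ abs (|x + y| - |x|) := le_abs_self _
              _ ≤ |y| := hd
        have hsxy : s ≤ |x| + |y| := by
          rw [hs, max_le_iff]
          exact ⟨(abs_add_le x y).trans (by linarith), by linarith [abs_nonneg y]⟩
        have hq1 : 0 ≤ q - 1 := by linarith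
        have hsq1 : s ^ (q-1) ≤ 2 ^ (q-1) * (|x| ^ (q-1) + |y| ^ (q-1)) := by
          have h1' : s ^ (q-1) ≤ (|x| + |y|) ^ (q-1) :=
            Real.rpow_le_rpow (le_trans htnn hts') hsxy hq1
          have h2' : (|x| + |y|) ^ (q-1) ≤ (2 * max |x| |y|) ^ (q-1) := by
            apply Real.rpow_le_rpow (by positivity) _ hq1
            rcases le_total |x| |y| with h | h
            · rw [max_eq_right h]; linarith
            · rw [max_eq_left h]; linarith
          have h3' : (2 * max |x| |y|) ^ (q-1) = 2 ^ (q-1) * (max |x| |y|) ^ (q-1) :=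
            Real.mul_rpow (by norm_num) (le_max_of_le_left (abs_nonneg x))
          have h4' : (max |x| |y|) ^ (q-1) ≤ |x| ^ (q-1) + |y| ^ (q-1) := by
            rcases le_total |x| |y| with h | h
            · rw [max_eq_right h]
              nlinarith [Real.rpow_nonneg (abs_nonneg x) (q-1)]
            · rw [max_eq_left h]
              nlinarith [Real.rpow_nonneg (abs_nonneg y) (q-1)]
          calc s ^ (q-1) ≤ (|x| + |y|) ^ (q-1) := h1'
            _ ≤ (2 * max |x| |y|) ^ (q-1) := h2'
            _ = 2 ^ (q-1) * (max |x| |y|) ^ (q-1) := h3'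
            _ ≤ 2 ^ (q-1) * (|x| ^ (q-1) + |y| ^ (q-1)) :=
                mul_le_mul_of_nonneg_left h4' h2q1.le
        have hmvt := rpow_sub_rpow_le_mvt q hq htnn hts'
        have hsq1nn : 0 ≤ s ^ (q-1) := Real.rpow_nonneg (le_trans htnn hts') _
        have hmain : s ^ q - t ^ q ≤
            q * 2 ^ (q-1) * (|x| ^ (q-1) * |y| + |y| ^ (q-1) * |y|) := by
          have h5 : q * s ^ (q-1) * (s - t) ≤ q * s ^ (q-1) * |y| :=
            mul_le_mul_of_nonneg_left hst (by positivity)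
          have h6 : q * s ^ (q-1) * |y| ≤
              q * (2 ^ (q-1) * (|x| ^ (q-1) + |y| ^ (q-1))) * |y| :=
            mul_le_mul_of_nonneg_right
              (mul_le_mul_of_nonneg_left hsq1 hq0.le) (abs_nonneg y)
          calc s ^ q - t ^ q ≤ q * s ^ (q-1) * (s - t) := hmvt
            _ ≤ q * s ^ (q-1) * |y| := h5
            _ ≤ q * (2 ^ (q-1) * (|x| ^ (q-1) + |y| ^ (q-1))) * |y| := h6
            _ = q * 2 ^ (q-1) * (|x| ^ (q-1) * |y| + |y| ^ (q-1) * |y|) := by ring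
        have hym : |y| ≤ (3/2) * m := by
          have hyxy : |y| ≤ |x + y| + |x| := by
            have h := abs_add_le (x + y) (-x)
            simp only [abs_neg] at h
            have he : x + y + -x = y := by ring
            rw [he] at h
            exact h
          have hyu : |y| ≤ 3/2 * u := by linarith
          rw [hm]
          rcases le_total |y| u with h | h
          · rw [min_eq_left h]; linarith
          · rw [min_eq_right h]; linarith
        have hyq : |y| ^ q ≤ (3/2) ^ q * m ^ q := by
          calc |y| ^ q ≤ ((3/2) * m) ^ q :=
                Real.rpow_le_rpow (abs_nonneg y) hym hq0.le
            _ = (3/2) ^ q * m ^ q := Real.mul_rpow (by norm_num) hmnn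
        have hyq1y : |y| ^ (q-1) * |y| = |y| ^ q := by
          calc |y| ^ (q-1) * |y| = |y| ^ (q-1) * |y| ^ (1:ℝ) := by
                rw [Real.rpow_one]
            _ = |y| ^ (q-1+1) := (Real.rpow_add hy0 (q-1) 1).symm
            _ = |y| ^ q := by norm_num
        rw [hLeq]
        rcases eq_or_lt_of_le hq with hq1' | hq1'
        · -- q = 1
          rw [if_neg (by rw [← hq1']; exact lt_irrefl 1)]
          have hqe : q = 1 := hq1'.symm
          have hL1 : s ^ q - t ^ q ≤ |y| := by
            rw [hqe, Real.rpow_one, Real.rpow_one]; linarith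
          have hmq : m ^ q = m := by rw [hqe, Real.rpow_one]
          have hC3 : (3:ℝ) ≤ C := by
            rw [hC]
            have : (0:ℝ) < ((2:ℝ) ^ q + 1) * 2 ^ a := by positivity
            linarith
          calc s ^ q - t ^ q ≤ |y| := hL1
            _ ≤ 3 * m ^ q := by rw [hmq]; linarith
            _ ≤ C * m ^ q := mul_le_mul_of_nonneg_right hC3 hT3
            _ ≤ C * (|x| ^ (q + a) / u ^ a + |x| ^ q * |y| ^ b / u ^ b + m ^ q + 0) := by
                nlinarith [mul_nonneg hCpos.le hT1, mul_nonneg hCpos.le hT2]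
        · -- q > 1
          rw [if_pos hq1']
          have hxq1 : 0 ≤ |x| ^ (q-1) := Real.rpow_nonneg (abs_nonneg x) _
          have hq32 : (3:ℝ)/2 ≤ (3/2) ^ q := by
            calc (3:ℝ)/2 = (3/2) ^ (1:ℝ) := (Real.rpow_one _).symm
              _ ≤ (3/2) ^ q := Real.rpow_le_rpow_left_iff (by norm_num) |>.mpr hq
          have hb1 : |x| ^ (q-1) * |y| ≤ (3/2) * (|x| ^ (q-1) * m) := by nlinarith
          have hb2 : |y| ^ (q-1) * |y| ≤ (3/2) ^ q * m ^ q := by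
            rw [hyq1y]; exact hyq
          have hbound : s ^ q - t ^ q ≤
              3 * q * 2 ^ (q-1) * (3/2) ^ q * (|x| ^ (q-1) * m + m ^ q) := by
            have hfac : 0 ≤ q * 2 ^ (q-1) := by positivity
            have hstep : q * 2 ^ (q-1) * (|x| ^ (q-1) * |y| + |y| ^ (q-1) * |y|) ≤
                q * 2 ^ (q-1) * ((3/2) * (|x| ^ (q-1) * m) + (3/2) ^ q * m ^ q) :=
              mul_le_mul_of_nonneg_left (by linarith) hfac
            have hxm : 0 ≤ |x| ^ (q-1) * m := mul_nonneg hxq1 hmnn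
            have e1 : 3 * q * 2 ^ (q-1) * (3/2) ^ q * (|x| ^ (q-1) * m + m ^ q)
                - q * 2 ^ (q-1) * ((3/2) * (|x| ^ (q-1) * m) + (3/2) ^ q * m ^ q)
                = (q * 2 ^ (q-1)) * (|x| ^ (q-1) * m) * (3 * (3/2) ^ q - 3/2)
                  + 2 * ((q * 2 ^ (q-1)) * (m ^ q) * ((3/2) ^ q)) := by ring
            have e2 : 0 ≤ (q * 2 ^ (q-1)) * (|x| ^ (q-1) * m) * (3 * (3/2) ^ q - 3/2) :=
              mul_nonneg (mul_nonneg hfac hxm) (by linarith)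
            have e3 : 0 ≤ (q * 2 ^ (q-1)) * (m ^ q) * ((3/2) ^ q) :=
              mul_nonneg (mul_nonneg hfac hT3) h32q.le
            linarith
          have hcC : 3 * q * 2 ^ (q-1) * (3/2) ^ q ≤ C := by
            rw [hC]
            have : (0:ℝ) < ((2:ℝ) ^ q + 1) * 2 ^ a := by positivity
            linarith
          have hsum : 0 ≤ |x| ^ (q-1) * m + m ^ q :=
            add_nonneg (mul_nonneg hxq1 hmnn) hT3
          calc s ^ q - t ^ q
              ≤ 3 * q * 2 ^ (q-1) * (3/2) ^ q * (|x| ^ (q-1) * m + m ^ q) := hbound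
            _ ≤ C * (|x| ^ (q-1) * m + m ^ q) :=
                mul_le_mul_of_nonneg_right hcC hsum
            _ ≤ C * (|x| ^ (q + a) / u ^ a + |x| ^ q * |y| ^ b / u ^ b + m ^ q +
                  |x| ^ (q-1) * m) := by
                nlinarith [mul_nonneg hCpos.le hT1, mul_nonneg hCpos.le hT2]
    · -- Case 2 : |x| < u/2 and u < |x+y|
      rw [if_neg (not_le.mpr h2)]
      rw [zero_sub, abs_neg, abs_of_nonneg (Real.rpow_nonneg (abs_nonneg x) q)]
      have hyu : u / 2 ≤ |y| := by
        have : |x + y| ≤ |x| + |y| := abs_add_le x y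
        linarith
      have hub : u ^ b ≤ 2 ^ b * |y| ^ b := by
        calc u ^ b ≤ (2 * |y|) ^ b := Real.rpow_le_rpow hu.le (by linarith) hb
          _ = 2 ^ b * |y| ^ b := Real.mul_rpow (by norm_num) (abs_nonneg y)
      have hub0 : (0:ℝ) < u ^ b := Real.rpow_pos_of_pos hu b
      have hxq : 0 ≤ |x| ^ q := Real.rpow_nonneg (abs_nonneg x) q
      have hkey : |x| ^ q ≤ 2 ^ b * (|x| ^ q * |y| ^ b / u ^ b) := by
        rw [← sub_nonneg]
        have key : 2 ^ b * (|x| ^ q * |y| ^ b / u ^ b) - |x| ^ q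
            = |x| ^ q * (2 ^ b * |y| ^ b - u ^ b) / u ^ b := by field_simp
        rw [key]
        exact div_nonneg (mul_nonneg hxq (by linarith)) hub0.le
      have hC2 : (2:ℝ) ^ b ≤ C := by
        rw [hC]
        have : (0:ℝ) < ((2:ℝ) ^ q + 1) * 2 ^ a := by positivity
        linarith
      calc |x| ^ q ≤ 2 ^ b * (|x| ^ q * |y| ^ b / u ^ b) := hkey
        _ ≤ C * (|x| ^ q * |y| ^ b / u ^ b) := mul_le_mul_of_nonneg_right hC2 hT2
        _ ≤ C * (|x| ^ (q + a) / u ^ a + |x| ^ q * |y| ^ b / u ^ b + m ^ q +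
              if 1 < q then |x| ^ (q - 1) * m else 0) := by
            nlinarith [mul_nonneg hCpos.le hT1, mul_nonneg hCpos.le hT3,
              mul_nonneg hCpos.le hT4]
end

section
/- Let (Ω, F, P) be a probability space, let σ > 0 and τ > 0, let (X_l)_{l≥1} be an independent, identically distributed sequence of real random variables each with law N(0, σ²), and let Y be a random variable with law N(0, σ² + τ²) that is independent of the sequence (X_l). For L ≥ 1 define Z_L = Y / √((1/L)·∑_{l=1}^{L} X_l²). Let α ∈ (0, 1) and let c > 0 satisfy N(0, 1)({x : |x| > c}) = α. Then lim_{L→∞} P(|Z_L| > c) = N(0, 1 + τ²/σ²)({x : |x| > c}), and this limit is strictly greater than α and strictly less than 1. -/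
open MeasureTheory ProbabilityTheory Filter

open MeasureTheory ProbabilityTheory Filter Real Set NNReal
open scoped ENNReal


lemma aux_integrable_sq_exp {b : ℝ} (hb : 0 < b) :
    Integrable (fun x : ℝ => x ^ 2 * Real.exp (-b * x ^ 2)) := by
  have h := integrable_rpow_mul_exp_neg_mul_sq hb (s := 2) (by norm_num)
  have h2 : ∀ x : ℝ, x ^ (2 : ℝ) = x ^ 2 := fun x => by
    rw [show (2 : ℝ) = ((2 : ℕ) : ℝ) by norm_num, Real.rpow_natCast]
  simpa [h2] using h

lemma aux_integral_sq_exp {b : ℝ} (hb : 0 < b) :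
    ∫ x : ℝ, x ^ 2 * Real.exp (-b * x ^ 2) = Real.sqrt (π / b) / (2 * b) := by
  have hx2 := aux_integrable_sq_exp hb
  have hexp := integrable_exp_neg_mul_sq hb
  set F : ℝ → ℝ := fun x => x * Real.exp (-b * x ^ 2) with hFdef
  have hF : ∀ x : ℝ, HasDerivAt F
      (Real.exp (-b * x ^ 2) - (2 * b) * (x ^ 2 * Real.exp (-b * x ^ 2))) x := by
    intro x
    have h1 : HasDerivAt (fun y : ℝ => -b * y ^ 2) (-b * (2 * x)) x := by
      simpa using (hasDerivAt_pow 2 x).const_mul (-b)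
    have h3 := (hasDerivAt_id x).mul h1.exp
    refine h3.congr_deriv ?_
    simp only [id_eq, one_mul]
    ring
  have hFtop : Tendsto F atTop (nhds 0) := by
    have h := rpow_mul_exp_neg_mul_sq_isLittleO_exp_neg hb 1
    have h' : F =o[atTop] fun x : ℝ => Real.exp (-(1/2) * x) := by
      simpa [hFdef, Real.rpow_one] using h
    have hlim : Tendsto (fun x : ℝ => Real.exp (-(1/2) * x)) atTop (nhds 0) := by
      have hinner : Tendsto (fun x : ℝ => -(1/2) * x) atTop atBot := by
        have := (tendsto_id (α := ℝ) (x := atTop)).atTop_div_const (two_pos)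
        have := tendsto_neg_atTop_atBot.comp this
        refine this.congr fun x => ?_
        simp [Function.comp]
        ring
      exact Real.tendsto_exp_atBot.comp hinner
    exact h'.trans_tendsto hlim
  have hint' : IntegrableOn
      (fun x : ℝ => Real.exp (-b * x ^ 2) - (2 * b) * (x ^ 2 * Real.exp (-b * x ^ 2)))
      (Ioi 0) := (hexp.sub (hx2.const_mul (2 * b))).integrableOn
  have I1 := integral_Ioi_of_hasDerivAt_of_tendsto' (f := F)
      (fun x _ => hF x) hint' hFtop
  have hF0 : F 0 = 0 := by simp [hFdef]
  rw [hF0, sub_zero] at I1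
  have Isub : ∫ x in Ioi (0:ℝ), (Real.exp (-b * x ^ 2)
        - (2 * b) * (x ^ 2 * Real.exp (-b * x ^ 2)))
      = (∫ x in Ioi (0:ℝ), Real.exp (-b * x ^ 2))
        - ∫ x in Ioi (0:ℝ), (2 * b) * (x ^ 2 * Real.exp (-b * x ^ 2)) :=
    integral_sub hexp.integrableOn ((hx2.const_mul (2 * b)).integrableOn)
  rw [Isub, integral_gaussian_Ioi b, integral_const_mul] at I1
  have hIoi : ∫ x in Ioi (0:ℝ), x ^ 2 * Real.exp (-b * x ^ 2)
      = Real.sqrt (π / b) / (4 * b) := by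
    have hb' : (2 * b) ≠ 0 := by positivity
    field_simp at I1 ⊢
    linarith
  have habs : ∫ x : ℝ, x ^ 2 * Real.exp (-b * x ^ 2)
      = 2 * ∫ x in Ioi (0:ℝ), x ^ 2 * Real.exp (-b * x ^ 2) := by
    rw [← integral_comp_abs (f := fun x : ℝ => x ^ 2 * Real.exp (-b * x ^ 2))]
    congr 1
    funext x
    rw [sq_abs]
  rw [habs, hIoi]
  field_simp
  ring

lemma aux_withDensity (v : ℝ≥0) (hv : v ≠ 0) :
    gaussianReal 0 v
      = volume.withDensity (fun x => ((Real.toNNReal (gaussianPDFReal 0 v x) : ℝ≥0) : ℝ≥0∞)) := by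
  rw [gaussianReal_of_var_ne_zero _ hv]
  rfl

lemma aux_pdf_eq (v : ℝ≥0) (x : ℝ) :
    gaussianPDFReal 0 v x
      = (Real.sqrt (2 * π * (v:ℝ)))⁻¹ * Real.exp (-(2 * (v:ℝ))⁻¹ * x ^ 2) := by
  have h : ∀ y : ℝ, -(x - 0) ^ 2 / (2 * (v:ℝ)) = -(2 * (v:ℝ))⁻¹ * x ^ 2 := by
    intro y; rw [sub_zero]; ring
  rw [gaussianPDFReal, h 0]

lemma aux_integrable_sq_gaussian (v : ℝ≥0) (hv : v ≠ 0) :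
    Integrable (fun x : ℝ => x ^ 2) (gaussianReal 0 v) := by
  have hvpos : (0:ℝ) < (v:ℝ) := by positivity
  rw [aux_withDensity v hv,
    integrable_withDensity_iff_integrable_smul ((measurable_gaussianPDFReal 0 v).real_toNNReal)]
  have : (fun x : ℝ => (Real.toNNReal (gaussianPDFReal 0 v x) : ℝ≥0) • (x ^ 2))
      = fun x : ℝ => (Real.sqrt (2 * π * (v:ℝ)))⁻¹ * (x ^ 2 * Real.exp (-(2 * (v:ℝ))⁻¹ * x ^ 2)) := by
    funext x
    rw [NNReal.smul_def, smul_eq_mul, Real.coe_toNNReal _ (gaussianPDFReal_nonneg 0 v x),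
      aux_pdf_eq]
    ring
  rw [this]
  exact (aux_integrable_sq_exp (by positivity)).const_mul _

lemma aux_second_moment (v : ℝ≥0) (hv : v ≠ 0) :
    ∫ x : ℝ, x ^ 2 ∂(gaussianReal 0 v) = (v : ℝ) := by
  have hvpos : (0:ℝ) < (v:ℝ) := by positivity
  rw [aux_withDensity v hv,
    integral_withDensity_eq_integral_smul ((measurable_gaussianPDFReal 0 v).real_toNNReal)]
  have : (fun x : ℝ => (Real.toNNReal (gaussianPDFReal 0 v x) : ℝ≥0) • (x ^ 2))
      = fun x : ℝ => (Real.sqrt (2 * π * (v:ℝ)))⁻¹ * (x ^ 2 * Real.exp (-(2 * (v:ℝ))⁻¹ * x ^ 2)) := by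
    funext x
    rw [NNReal.smul_def, smul_eq_mul, Real.coe_toNNReal _ (gaussianPDFReal_nonneg 0 v x),
      aux_pdf_eq]
    ring
  rw [this, integral_const_mul, aux_integral_sq_exp (by positivity)]
  have h1 : π / (2 * (v:ℝ))⁻¹ = 2 * π * (v:ℝ) := by field_simp
  rw [h1]
  have h2 : (2 * (2 * (v:ℝ))⁻¹) = (v:ℝ)⁻¹ := by field_simp
  rw [h2]
  have h3 : Real.sqrt (2 * π * (v:ℝ)) ≠ 0 := by positivity
  field_simp
/-- Rejection probability of the close-to-open jump test under the alternative: with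
`Y = G 0 ∼ N(0, σ² + τ²)` independent of the i.i.d. `N(0, σ²)` sequence `G l`, `l ≥ 1`,
the statistic `Z_L = Y / √((1/L) ∑_{l=1}^L G l²)` satisfies
`P(|Z_L| > c) → N(0, 1 + τ²/σ²)({|x| > c})`, which is strictly between `α` and `1`,
where `c` is the two-sided standard normal critical value at level `α`. -/
theorem close_to_open_test_rejection_probability
    {Ω : Type*} [MeasurableSpace Ω] (P : Measure Ω) [IsProbabilityMeasure P]
    (σ τ : ℝ) (hσ : 0 < σ) (hτ : 0 < τ) (G : ℕ → Ω → ℝ)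
    (hmeas : ∀ n, Measurable (G n))
    (hindep : iIndepFun G P)
    (hlaw0 : Measure.map (G 0) P = gaussianReal 0 ⟨σ ^ 2 + τ ^ 2, by positivity⟩)
    (hlaw : ∀ n, 1 ≤ n → Measure.map (G n) P = gaussianReal 0 ⟨σ ^ 2, sq_nonneg σ⟩)
    (α : ℝ) (hα : α ∈ Set.Ioo (0 : ℝ) 1) (c : ℝ) (hc : 0 < c)
    (hcrit : (gaussianReal 0 1 {x : ℝ | c < |x|}).toReal = α) :
    Tendsto
        (fun L : ℕ =>
          (P {ω | c < |G 0 ω / Real.sqrt ((1 / (L : ℝ)) * ∑ l ∈ Finset.Icc 1 L, (G l ω) ^ 2)|}).toReal)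
        atTop
        (nhds ((gaussianReal 0 ⟨1 + τ ^ 2 / σ ^ 2, by positivity⟩ {x : ℝ | c < |x|}).toReal)) ∧
      α < (gaussianReal 0 ⟨1 + τ ^ 2 / σ ^ 2, by positivity⟩ {x : ℝ | c < |x|}).toReal ∧
      (gaussianReal 0 ⟨1 + τ ^ 2 / σ ^ 2, by positivity⟩ {x : ℝ | c < |x|}).toReal < 1 := by
  have hσ2 : (⟨σ ^ 2, sq_nonneg σ⟩ : ℝ≥0) ≠ 0 := by
    refine NNReal.coe_ne_zero.mp ?_
    show (σ ^ 2 : ℝ) ≠ 0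
    positivity
  have hv' : (⟨1 + τ ^ 2 / σ ^ 2, by positivity⟩ : ℝ≥0) ≠ 0 := by
    refine NNReal.coe_ne_zero.mp ?_
    show (1 + τ ^ 2 / σ ^ 2 : ℝ) ≠ 0
    positivity
  set v : ℝ≥0 := ⟨1 + τ ^ 2 / σ ^ 2, by positivity⟩ with hvdef
  -- the set of interest on ℝ
  set Aset : Set ℝ := {x : ℝ | c < |x|} with hAset
  have hAsetMeas : MeasurableSet Aset := measurableSet_lt measurable_const measurable_abs
  -- Part 1: strong law of large numbers
  set X : ℕ → Ω → ℝ := fun l ω => (G (l + 1) ω) ^ 2 with hXdef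
  have hXmeas : ∀ n, Measurable (X n) := fun n => (hmeas (n + 1)).pow_const 2
  have hGident : ∀ i : ℕ, IdentDistrib (G (i + 1)) (G 1) P P := by
    intro i
    refine ⟨(hmeas _).aemeasurable, (hmeas _).aemeasurable, ?_⟩
    rw [hlaw (i + 1) (Nat.succ_le_succ (Nat.zero_le i)), hlaw 1 le_rfl]
  have hXident : ∀ i, IdentDistrib (X i) (X 0) P P := fun i =>
    (hGident i).comp (measurable_id.pow_const 2)
  have hXindep : Pairwise (Function.onFun (IndepFun · · P) X) := by
    intro i j hij
    exact (hindep.indepFun (by omega : i + 1 ≠ j + 1)).comp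
      (measurable_id.pow_const 2) (measurable_id.pow_const 2)
  have hXint : Integrable (X 0) P := by
    have h := (integrable_map_measure
        ((measurable_id'.pow_const 2).aestronglyMeasurable (α := ℝ))
        (hmeas 1).aemeasurable).mp
      (by rw [hlaw 1 le_rfl]; exact aux_integrable_sq_gaussian _ hσ2)
    exact h
  have hEX : ∫ ω, X 0 ω ∂P = σ ^ 2 := by
    have h := integral_map (μ := P) (φ := G 1) (hmeas 1).aemeasurable
      ((measurable_id'.pow_const 2).aestronglyMeasurable (μ := Measure.map (G 1) P))
    rw [hlaw 1 le_rfl, aux_second_moment _ hσ2] at h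
    exact h.symm
  have hSLLN := strong_law_ae_real X hXint hXindep hXident
  rw [hEX] at hSLLN
  -- Part 2: the null set where |G 0 / σ| = c
  have hnull : P {ω | G 0 ω = σ * c ∨ G 0 ω = -(σ * c)} = 0 := by
    have hpre : {ω | G 0 ω = σ * c ∨ G 0 ω = -(σ * c)}
        = G 0 ⁻¹' ({σ * c, -(σ * c)} : Set ℝ) := by
      ext ω; simp [Set.mem_preimage]
    rw [hpre, ← Measure.map_apply (hmeas 0)
      ((measurableSet_singleton _).insert _), hlaw0]
    refine (gaussianReal_absolutelyContinuous 0 ?_) ?_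
    · refine NNReal.coe_ne_zero.mp ?_
      show (σ ^ 2 + τ ^ 2 : ℝ) ≠ 0
      positivity
    · exact (Set.toFinite _).measure_zero _
  have hae : ∀ᵐ ω ∂P, ¬(G 0 ω = σ * c ∨ G 0 ω = -(σ * c)) := by
    rw [ae_iff]
    simp only [not_not]
    exact hnull
  -- Part 3: a.e. convergence of indicators
  set A : ℕ → Set Ω := fun L =>
    {ω | c < |G 0 ω / Real.sqrt ((1 / (L : ℝ)) * ∑ l ∈ Finset.Icc 1 L, (G l ω) ^ 2)|} with hAdef
  set Ainf : Set Ω := {ω | c < |G 0 ω / σ|} with hAinf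
  have hAmeas : ∀ L, MeasurableSet (A L) := by
    intro L
    refine measurableSet_lt measurable_const ?_
    exact ((hmeas 0).div ((Real.continuous_sqrt.measurable).comp
      (measurable_const.mul (Finset.measurable_sum _ (fun l _ => (hmeas l).pow_const 2))))).abs
  have hAinfMeas : MeasurableSet Ainf :=
    measurableSet_lt measurable_const ((hmeas 0).div measurable_const).abs
  have hind : ∀ᵐ ω ∂P, Tendsto (fun L => (A L).indicator (fun _ => (1:ℝ)) ω) atTop
      (nhds (Ainf.indicator (fun _ => (1:ℝ)) ω)) := by
    filter_upwards [hSLLN, hae] with ω h1 h2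
    have hS : Tendsto (fun L : ℕ => (1 / (L : ℝ)) * ∑ l ∈ Finset.Icc 1 L, (G l ω) ^ 2)
        atTop (nhds (σ ^ 2)) := by
      refine h1.congr fun L => ?_
      rw [← Finset.Ico_add_one_right_eq_Icc, Finset.sum_Ico_eq_sum_range]
      simp only [Nat.add_sub_cancel]
      rw [one_div, inv_mul_eq_div]
      congr 1
      exact Finset.sum_congr rfl fun i _ => by rw [Nat.add_comm 1 i]
    have hsqrt : Tendsto (fun L : ℕ =>
        Real.sqrt ((1 / (L : ℝ)) * ∑ l ∈ Finset.Icc 1 L, (G l ω) ^ 2)) atTop (nhds σ) := by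
      have h := (Real.continuous_sqrt.tendsto (σ ^ 2)).comp hS
      rwa [Real.sqrt_sq hσ.le] at h
    have hZ : Tendsto (fun L : ℕ =>
        G 0 ω / Real.sqrt ((1 / (L : ℝ)) * ∑ l ∈ Finset.Icc 1 L, (G l ω) ^ 2)) atTop
        (nhds (G 0 ω / σ)) := tendsto_const_nhds.div hsqrt hσ.ne'
    have habs := hZ.abs
    have hne : |G 0 ω / σ| ≠ c := by
      intro h
      apply h2
      rcases (abs_eq hc.le).mp h with h' | h'
      · left; rw [div_eq_iff hσ.ne'] at h'; rw [h']; ring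
      · right; rw [div_eq_iff hσ.ne'] at h'; rw [h']; ring
    rcases lt_or_gt_of_ne hne with hlt | hgt
    · have hnotmem : ω ∉ Ainf := by
        simp only [hAinf, Set.mem_setOf_eq, not_lt]
        exact hlt.le
      rw [Set.indicator_of_notMem hnotmem]
      have hev : ∀ᶠ L in atTop, (A L).indicator (fun _ => (1:ℝ)) ω = 0 := by
        filter_upwards [habs.eventually (eventually_lt_nhds hlt)] with L hL
        exact Set.indicator_of_notMem (by simpa [hAdef, not_lt] using hL.le) _
      exact Tendsto.congr' (hev.mono fun L h => h.symm) tendsto_const_nhds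
    · have hmem : ω ∈ Ainf := hgt
      rw [Set.indicator_of_mem hmem]
      have hev : ∀ᶠ L in atTop, (A L).indicator (fun _ => (1:ℝ)) ω = 1 := by
        filter_upwards [habs.eventually (eventually_gt_nhds hgt)] with L hL
        exact Set.indicator_of_mem (show ω ∈ A L from hL) (fun _ => (1:ℝ))
      exact Tendsto.congr' (hev.mono fun L h => h.symm) tendsto_const_nhds
  -- DCT
  have hDCT : Tendsto (fun L => ∫ ω, (A L).indicator (fun _ => (1:ℝ)) ω ∂P) atTop
      (nhds (∫ ω, Ainf.indicator (fun _ => (1:ℝ)) ω ∂P)) := by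
    refine tendsto_integral_of_dominated_convergence (fun _ => (1:ℝ))
      (fun L => (measurable_const.indicator (hAmeas L)).aestronglyMeasurable)
      (integrable_const 1) (fun L => Eventually.of_forall fun ω => ?_) hind
    by_cases h : ω ∈ A L <;> simp [Set.indicator_apply, h]
  -- law of G 0 / σ
  have hlawZ : Measure.map (fun ω => G 0 ω / σ) P = gaussianReal 0 v := by
    have hcomp : (fun ω => G 0 ω / σ) = (fun x : ℝ => x * σ⁻¹) ∘ G 0 := by
      funext ω; rw [Function.comp_apply, div_eq_mul_inv]
    rw [hcomp, ← Measure.map_map (measurable_id'.mul_const σ⁻¹) (hmeas 0), hlaw0,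
      gaussianReal_map_mul_const (μ := 0) (v := ⟨σ ^ 2 + τ ^ 2, by positivity⟩) σ⁻¹]
    congr 1
    · simp
    · ext
      push_cast
      field_simp
      rw [show ((v : ℝ)) = 1 + τ ^ 2 / σ ^ 2 from rfl]
      field_simp
      show σ ^ 2 * (1 / σ ^ 2 * (σ ^ 2 + τ ^ 2)) = σ ^ 2 + τ ^ 2
      field_simp
  have hPAinf : P Ainf = gaussianReal 0 v Aset := by
    rw [← hlawZ, Measure.map_apply (f := fun ω => G 0 ω / σ) ((hmeas 0).div measurable_const) hAsetMeas]
    rfl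
  -- the limit statement
  have htendsto : Tendsto (fun L : ℕ => (P (A L)).toReal) atTop
      (nhds ((gaussianReal 0 v Aset).toReal)) := by
    have h1 : ∀ L, ∫ ω, (A L).indicator (fun _ => (1:ℝ)) ω ∂P = (P (A L)).toReal :=
      fun L => integral_indicator_one (hAmeas L)
    have h2 : ∫ ω, Ainf.indicator (fun _ => (1:ℝ)) ω ∂P = (P Ainf).toReal :=
      integral_indicator_one hAinfMeas
    rw [← hPAinf, ← h2]
    exact hDCT.congr fun L => h1 L
  -- Part 4: strict inequalities
  set s : ℝ := Real.sqrt (1 + τ ^ 2 / σ ^ 2) with hsdef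
  have hs1 : 1 < s := by
    rw [hsdef]
    refine (Real.lt_sqrt (by positivity)).mpr ?_
    have : 0 < τ ^ 2 / σ ^ 2 := by positivity
    nlinarith
  have hs0 : 0 < s := lt_trans one_pos hs1
  have hmapv : gaussianReal 0 v Aset = gaussianReal 0 1 {x : ℝ | c / s < |x|} := by
    have hv_eq : NNReal.mk (s ^ 2) (sq_nonneg s) * 1 = v := by
      ext
      simp [hsdef, Real.sq_sqrt (by positivity : (0:ℝ) ≤ 1 + τ ^ 2 / σ ^ 2)]
      rfl
    have hmap := gaussianReal_map_const_mul (μ := 0) (v := 1) s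
    rw [mul_zero, hv_eq] at hmap
    rw [← hmap, Measure.map_apply (measurable_const_mul s) hAsetMeas]
    congr 1
    ext x
    simp only [Set.mem_preimage, hAset, Set.mem_setOf_eq, abs_mul, abs_of_pos hs0]
    rw [div_lt_iff₀ hs0, mul_comm]
  have hposIoc : gaussianReal 0 1 (Set.Ioc (c / s) c) ≠ 0 := by
    intro h
    have h0 := (gaussianReal_absolutelyContinuous' 0 one_ne_zero) h
    rw [Real.volume_Ioc] at h0
    have hlt : c / s < c := div_lt_self hc hs1
    simp only [ENNReal.ofReal_eq_zero] at h0
    linarith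
  have key1 : gaussianReal 0 1 Aset < gaussianReal 0 1 {x : ℝ | c / s < |x|} := by
    have hdisj : Disjoint Aset (Set.Ioc (c / s) c) := by
      rw [Set.disjoint_left]
      intro x hx hx2
      have : |x| = x := abs_of_pos (lt_trans (by positivity) hx2.1)
      rw [hAset, Set.mem_setOf_eq, this] at hx
      exact absurd hx2.2 (not_le.mpr hx)
    have hsub : Aset ∪ Set.Ioc (c / s) c ⊆ {x : ℝ | c / s < |x|} := by
      intro x hx
      rcases hx with hx | hx
      · exact lt_trans (div_lt_self hc hs1) hx
      · exact lt_of_lt_of_le hx.1 (le_abs_self x)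
    calc gaussianReal 0 1 Aset
        < gaussianReal 0 1 Aset + gaussianReal 0 1 (Set.Ioc (c / s) c) :=
          ENNReal.lt_add_right (measure_ne_top _ _) hposIoc
      _ = gaussianReal 0 1 (Aset ∪ Set.Ioc (c / s) c) :=
          (measure_union hdisj measurableSet_Ioc).symm
      _ ≤ _ := measure_mono hsub
  have key2 : gaussianReal 0 v Aset < 1 := by
    have hcompl : gaussianReal 0 v Asetᶜ ≠ 0 := by
      have hsub : Set.Ioc 0 c ⊆ Asetᶜ := by
        intro x hx
        simp only [hAset, Set.mem_compl_iff, Set.mem_setOf_eq, not_lt]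
        rw [abs_of_pos hx.1]
        exact hx.2
      intro h
      have h2 : gaussianReal 0 v (Set.Ioc 0 c) = 0 :=
        le_antisymm (h ▸ measure_mono hsub) zero_le
      have h0 := (gaussianReal_absolutelyContinuous' 0 hv') h2
      rw [Real.volume_Ioc] at h0
      simp only [ENNReal.ofReal_eq_zero] at h0
      linarith
    refine lt_of_le_of_ne prob_le_one fun h => hcompl ?_
    rw [measure_compl hAsetMeas (measure_ne_top _ _), measure_univ, h, tsub_self]
  refine ⟨htendsto, ?_, ?_⟩
  · rw [← hcrit]
    rw [hmapv]
    exact (ENNReal.toReal_lt_toReal (measure_ne_top _ _) (measure_ne_top _ _)).mpr key1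
  · rw [show (1:ℝ) = (1:ℝ≥0∞).toReal from rfl]
    exact (ENNReal.toReal_lt_toReal (measure_ne_top _ _) ENNReal.one_ne_top).mpr key2
end
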